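/- Let q > 1 be a real number, k ≥ 1 an integer, and γ a complex number with |γ| = 1. Then the polynomial equation γ X^{2k} − (γ/√q) X^{2k−1} − X/√q + 1 = 0 has exactly 2k roots, all lying on the unit circle |X| = 1. -/

import Mathlib

open Real Polynomial

lemma abs_eq_one_of_root (s : ℝ) (hs : 1 < s) (γ z : ℂ) (hγ : ‖γ‖ = 1) (m : ℕ)
    (h : γ * s * z ^ (m + 2) - γ * z ^ (m + 1) - z + s = 0) : ‖z‖ = 1 := by
  have e1 : γ * z ^ (m + 1) * ((s : ℂ) * z - 1) = z - s := by linear_combination h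
  have habs : ‖z‖ ^ (m + 1) * ‖(s : ℂ) * z - 1‖
      = ‖z - (s : ℂ)‖ := by
    have := congrArg (‖·‖) e1
    rw [norm_mul, norm_mul, norm_pow, hγ, one_mul] at this
    exact this
  have key : ‖(s : ℂ) * z - 1‖ ^ 2 - ‖z - (s : ℂ)‖ ^ 2
      = (s ^ 2 - 1) * (‖z‖ ^ 2 - 1) := by
    simp only [Complex.sq_norm, Complex.normSq_apply, Complex.sub_re, Complex.sub_im,
      Complex.mul_re, Complex.mul_im, Complex.ofReal_re, Complex.ofReal_im,
      Complex.one_re, Complex.one_im]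
    ring
  set a := ‖z‖ with ha
  set A := ‖(s : ℂ) * z - 1‖ with hA
  set B := ‖z - (s : ℂ)‖ with hB
  have ha0 : 0 ≤ a := norm_nonneg _
  have hA0 : 0 ≤ A := norm_nonneg _
  have hB0 : 0 ≤ B := norm_nonneg _
  rcases lt_trichotomy a 1 with h1 | h1 | h1
  · exfalso
    have hp : a ^ (m + 1) ≤ 1 := pow_le_one₀ ha0 h1.le
    have h2 : A ^ 2 - B ^ 2 < 0 := by
      rw [key]
      apply mul_neg_of_pos_of_neg <;> nlinarith
    have hAB : A < B := by nlinarith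
    have hle : B ≤ A := by
      rw [← habs]
      exact mul_le_of_le_one_left hA0 hp
    linarith
  · exact h1
  · exfalso
    have hp : 1 ≤ a ^ (m + 1) := one_le_pow₀ h1.le
    have h2 : 0 < A ^ 2 - B ^ 2 := by
      rw [key]
      apply mul_pos <;> nlinarith
    have hAB : B < A := by nlinarith
    have hle : A ≤ B := by
      rw [← habs]
      exact le_mul_of_one_le_left hA0 hp
    linarith

lemma no_double_root (s : ℝ) (hs : 1 < s) (γ z : ℂ) (hγ : ‖γ‖ = 1) (m : ℕ)
    (hroot : γ * s * z ^ (m + 2) - γ * z ^ (m + 1) - z + s = 0)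
    (hder : γ * s * (m + 2) * z ^ (m + 1) - γ * (m + 1) * z ^ m - 1 = 0) : False := by
  have hz1 : ‖z‖ = 1 := abs_eq_one_of_root s hs γ z hγ m hroot
  have e1 : γ * z ^ (m + 1) * ((s : ℂ) * z - 1) = z - s := by linear_combination hroot
  have e2 : γ * z ^ (m + 1) * (((m : ℂ) + 2) * s * z - ((m : ℂ) + 1)) = z := by
    linear_combination z * hder
  have e3 : (z - s) * (((m : ℂ) + 2) * s * z - ((m : ℂ) + 1)) = z * ((s : ℂ) * z - 1) := by
    linear_combination ((s : ℂ) * z - 1) * e2 - (((m : ℂ) + 2) * s * z - ((m : ℂ) + 1)) * e1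
  have e4 : ((((m : ℝ) + 1) * s : ℝ) : ℂ) * (z ^ 2 + 1)
      = ((((m : ℝ) + (((m : ℝ) + 2) * s ^ 2)) : ℝ) : ℂ) * z := by
    push_cast
    linear_combination e3
  have habs := congrArg (‖·‖) e4
  rw [norm_mul, norm_mul, Complex.norm_real, Complex.norm_real, Real.norm_eq_abs, Real.norm_eq_abs, hz1, mul_one] at habs
  have hpos1 : (0:ℝ) < ((m : ℝ) + 1) * s := by positivity
  have hpos2 : (0:ℝ) < (m : ℝ) + ((m : ℝ) + 2) * s ^ 2 := by positivity
  rw [abs_of_pos hpos1, abs_of_pos hpos2] at habs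
  have htri : ‖z ^ 2 + 1‖ ≤ 2 := by
    have h := norm_add_le (z ^ 2) (1 : ℂ)
    rw [norm_pow, hz1] at h
    norm_num at h
    linarith
  have hm0 : (0:ℝ) ≤ (m : ℝ) := Nat.cast_nonneg m
  nlinarith [mul_pos (sub_pos.2 hs) (by nlinarith : (0:ℝ) < ((m:ℝ) + 2) * s - m),
    norm_nonneg (z ^ 2 + 1)]

theorem roots_on_unit_circle (q : ℝ) (hq : 1 < q) (k : ℕ) (hk : 1 ≤ k)
    (γ : ℂ) (hγ : ‖γ‖ = 1) :
    ∃ S : Finset ℂ, S.card = 2 * k ∧ (∀ z ∈ S, ‖z‖ = 1) ∧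
      ∀ z : ℂ,
        (γ * z ^ (2 * k) - (γ / (Real.sqrt q : ℂ)) * z ^ (2 * k - 1)
            - z / (Real.sqrt q : ℂ) + 1 = 0) ↔ z ∈ S := by
  classical
  set s : ℝ := Real.sqrt q with hsdef
  have hs : 1 < s := by
    rw [hsdef, show (1:ℝ) = Real.sqrt 1 by simp]
    exact Real.sqrt_lt_sqrt (by norm_num) hq
  have hs0 : (s : ℂ) ≠ 0 := by
    simp only [ne_eq, Complex.ofReal_eq_zero]
    linarith
  have hγ0 : γ ≠ 0 := by
    intro h; rw [h] at hγ; simp at hγ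
  obtain ⟨m, hm⟩ : ∃ m, 2 * k = m + 2 := ⟨2 * k - 2, by omega⟩
  set P : Polynomial ℂ := C (γ * s) * X ^ (m + 2) - C γ * X ^ (m + 1) - X + C (s : ℂ)
    with hPdef
  have hlc : γ * (s : ℂ) ≠ 0 := mul_ne_zero hγ0 hs0
  have hdeg : P.natDegree = m + 2 := by
    rw [hPdef]
    compute_degree!
    exact ⟨hγ0, by intro h; rw [h] at hs; linarith⟩
  have hP0 : P ≠ 0 := by
    intro h
    rw [h] at hdeg
    simp at hdeg
  have heval : ∀ z : ℂ, P.eval z = γ * s * z ^ (m + 2) - γ * z ^ (m + 1) - z + s := by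
    intro z
    simp [hPdef]
  have hdeval : ∀ z : ℂ, P.derivative.eval z
      = γ * s * (m + 2) * z ^ (m + 1) - γ * (m + 1) * z ^ m - 1 := by
    intro z
    rw [hPdef]
    simp [derivative_X_pow]
    ring
  have hcard : P.roots.card = m + 2 := by
    rw [← hdeg]
    exact (splits_iff_card_roots.1 (IsAlgClosed.splits P))
  have hnodup : P.roots.Nodup := by
    rw [Multiset.nodup_iff_count_le_one]
    intro z
    by_contra hc
    push_neg at hc
    rw [count_roots] at hc
    obtain ⟨h0, h1⟩ := (one_lt_rootMultiplicity_iff_isRoot hP0).1 hc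
    rw [IsRoot, heval] at h0
    rw [IsRoot, hdeval] at h1
    exact no_double_root s hs γ z hγ m h0 h1
  refine ⟨P.roots.toFinset, ?_, ?_, ?_⟩
  · rw [Multiset.toFinset_card_of_nodup hnodup, hcard, hm]
  · intro z hz
    rw [Multiset.mem_toFinset, mem_roots'] at hz
    have := hz.2
    rw [IsRoot, heval] at this
    exact abs_eq_one_of_root s hs γ z hγ m this
  · intro z
    rw [show 2 * k - 1 = m + 1 from by omega, hm]
    rw [Multiset.mem_toFinset, mem_roots']
    constructor
    · intro h
      refine ⟨hP0, ?_⟩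
      rw [IsRoot, heval]
      field_simp at h
      linear_combination h
    · rintro ⟨-, h⟩
      rw [IsRoot, heval] at h
      field_simp
      linear_combination h
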